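/- Assume |d| > 2 and let r_j(d) = f_n(d)/(f_j(d)·f_{j+1}(d)) for 1 ≤ j ≤ n−1. Then ∑_{j=1}^{n−1} r_j(d) = f_{n−1}(d). -/

import Mathlib

noncomputable def f (d : ℝ) : ℕ → ℝ
  | 0 => 0
  | 1 => 1
  | (i + 2) => -d * f d (i + 1) - f d i

lemma f_two (d : ℝ) (i : ℕ) : f d (i + 2) = -d * f d (i + 1) - f d i := rfl

lemma f_grow (d : ℝ) (hd : |d| > 2) : ∀ j, |f d j| + 1 ≤ |f d (j + 1)|
  | 0 => by simp [f]
  | (j+1) => by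
    have ih := f_grow d hd j
    have h0 : (0:ℝ) ≤ |f d j| := abs_nonneg _
    have h1 : (1:ℝ) ≤ |f d (j+1)| := by linarith
    rw [f_two]
    have : |d| * |f d (j+1)| - |f d j| ≤ |-d * f d (j+1) - f d j| := by
      have := abs_sub_abs_le_abs_sub (-d * f d (j+1)) (f d j)
      rw [abs_mul, abs_neg] at this
      linarith
    nlinarith

lemma f_ne (d : ℝ) (hd : |d| > 2) (j : ℕ) (hj : 1 ≤ j) : f d j ≠ 0 := by
  obtain ⟨k, rfl⟩ := Nat.exists_eq_add_of_le hj
  have := f_grow d hd k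
  have h0 : (0:ℝ) ≤ |f d k| := abs_nonneg _
  have : (1:ℝ) ≤ |f d (k+1)| := by linarith
  intro h
  rw [Nat.add_comm] at h
  rw [h] at this
  simp at this
  linarith

lemma f_add (d : ℝ) (a : ℕ) :
    ∀ b, f d (a + b + 1) = f d (a + 1) * f d (b + 1) - f d a * f d b
  | 0 => by simp [f]
  | 1 => by
    have : a + 1 + 1 = a + 2 := by ring
    rw [this, f_two]
    show _ = f d (a+1) * f d 2 - f d a * f d 1
    rw [show (2:ℕ) = 0 + 2 from rfl, f_two]
    simp [f]; ring
  | (b+2) => by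
    have h1 := f_add d a b
    have h2 := f_add d a (b+1)
    have e1 : a + (b + 2) + 1 = (a + b + 1) + 2 := by ring
    have e2 : (a + b + 1) + 1 = a + (b + 1) + 1 := by ring
    rw [e1, f_two, e2, h2, h1, show b + 2 + 1 = b + 1 + 2 from rfl, f_two d (b+1),
      show b + 1 + 1 = b + 2 from rfl, f_two d b]
    ring

theorem stmt_6 (d : ℝ) (hd : |d| > 2) (n : ℕ) (hn : 2 ≤ n) :
    ∑ j ∈ Finset.Icc 1 (n - 1), f d n / (f d j * f d (j + 1)) =
      f d (n - 1) := by
  have key : ∀ i ∈ Finset.range (n - 1),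
      f d n / (f d (1 + i) * f d (1 + i + 1)) =
        f d (n - 1 - i) / f d (i + 1) - f d (n - 1 - (i + 1)) / f d (i + 1 + 1) := by
    intro i hi
    rw [Finset.mem_range] at hi
    have hi' : i + 2 ≤ n := by omega
    have hne1 : f d (i + 1) ≠ 0 := f_ne d hd _ (by omega)
    have hne2 : f d (i + 2) ≠ 0 := f_ne d hd _ (by omega)
    have hadd := f_add d (n - 2 - i) (i + 1)
    have e1 : n - 2 - i + (i + 1) + 1 = n := by omega
    have e2 : n - 2 - i + 1 = n - 1 - i := by omega
    have e3 : n - 1 - (i + 1) = n - 2 - i := by omega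
    rw [e1, e2] at hadd
    rw [show 1 + i = i + 1 by ring, show i + 1 + 1 = i + 2 from rfl, e3, hadd]
    field_simp
  rw [show Finset.Icc 1 (n-1) = Finset.Ico 1 n from by
    rw [← Finset.Ico_add_one_right_eq_Icc]; congr 1; omega]
  rw [Finset.sum_Ico_eq_sum_range]
  rw [Finset.sum_congr rfl key,
    Finset.sum_range_sub' (fun i => f d (n - 1 - i) / f d (i + 1))]
  have : n - 1 - (n - 1) = 0 := by omega
  simp [this, f]
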